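/- Let a₁ ≤ a₂ be real numbers and s ∈ ℂ. The function φ(t) = t^{s-1} on (0,∞) satisfies, for every k ∈ ℕ, sup over t ∈ (0,∞) of ζ(t)·t^{k+1}·|φ^{(k)}(t)| < ∞ (where ζ(t) = t^{-a₁} for 0 < t ≤ 1 and ζ(t) = t^{-a₂} for t > 1) if and only if a₁ ≤ Re(s) ≤ a₂. -/

import Mathlib

open Complex Finset

lemma hasDerivAt_ofReal_cpow_const'' {t : ℝ} (ht : 0 < t) (w : ℂ) :
    HasDerivAt (fun u : ℝ => (u : ℂ) ^ w) (w * (t : ℂ) ^ (w - 1)) t := by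
  have h1 : HasDerivAt (fun z : ℂ => z ^ w) (w * (t : ℂ) ^ (w - 1) * 1) (t : ℂ) :=
    (hasDerivAt_id (t : ℂ)).cpow_const (by simp [Complex.mem_slitPlane_iff, ht])
  simpa using h1.comp_ofReal

lemma iteratedDeriv_ofReal_cpow (s : ℂ) (k : ℕ) :
    ∀ t : ℝ, 0 < t → iteratedDeriv k (fun u : ℝ => (u : ℂ) ^ (s - 1)) t
      = (∏ i ∈ Finset.range k, (s - 1 - i)) * (t : ℂ) ^ (s - 1 - k) := by
  induction k with
  | zero => intro t ht; simp
  | succ k ih =>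
    intro t ht
    rw [iteratedDeriv_succ]
    have hev : iteratedDeriv k (fun u : ℝ => (u : ℂ) ^ (s - 1))
        =ᶠ[nhds t] fun u : ℝ => (∏ i ∈ Finset.range k, (s - 1 - i)) * (u : ℂ) ^ (s - 1 - k) := by
      filter_upwards [Ioi_mem_nhds ht] with u hu
      exact ih u hu
    rw [hev.deriv_eq]
    have hd : HasDerivAt (fun u : ℝ => (∏ i ∈ Finset.range k, (s - 1 - i)) * (u : ℂ) ^ (s - 1 - k))
        ((∏ i ∈ Finset.range k, (s - 1 - i)) * ((s - 1 - k) * (t : ℂ) ^ (s - 1 - k - 1))) t :=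
      (hasDerivAt_ofReal_cpow_const'' ht _).const_mul _
    have he : s - 1 - ((k : ℂ) + 1) = s - 1 - k - 1 := by ring
    rw [hd.deriv, Finset.prod_range_succ]
    push_cast
    rw [he]
    ring

theorem t_pow_s_sub_one_in_M_a1_a2_iff
    (a₁ a₂ : ℝ) (h : a₁ ≤ a₂) (s : ℂ) :
    (∀ k : ℕ, ∃ C : ℝ, ∀ t : ℝ, 0 < t →
        (if t ≤ 1 then t ^ (-a₁) else t ^ (-a₂)) * t ^ (k + 1 : ℝ)
            * ‖iteratedDeriv k (fun u : ℝ => (u:ℂ) ^ (s - 1)) t‖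
          ≤ C)
      ↔ (a₁ ≤ s.re ∧ s.re ≤ a₂) := by
  constructor
  · intro H
    obtain ⟨C, hC⟩ := H 0
    have key : ∀ t : ℝ, 0 < t →
        (if t ≤ 1 then t ^ (s.re - a₁) else t ^ (s.re - a₂)) ≤ C := by
      intro t ht
      have h0 := hC t ht
      rw [iteratedDeriv_zero] at h0
      have habs : ‖(t:ℂ) ^ (s - 1)‖ = t ^ (s.re - 1) := by
        rw [Complex.norm_cpow_eq_rpow_re_of_pos ht]
        norm_num
      rw [habs] at h0
      have hk : ((0 : ℕ) + 1 : ℝ) = (1 : ℝ) := by norm_num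
      rw [hk] at h0
      split_ifs at h0 ⊢ with h1
      · have he : t ^ (-a₁) * t ^ (1:ℝ) * t ^ (s.re - 1) = t ^ (s.re - a₁) := by
          rw [← Real.rpow_add ht, ← Real.rpow_add ht]
          congr 1; ring
        rwa [he] at h0
      · have he : t ^ (-a₂) * t ^ (1:ℝ) * t ^ (s.re - 1) = t ^ (s.re - a₂) := by
          rw [← Real.rpow_add ht, ← Real.rpow_add ht]
          congr 1; ring
        rwa [he] at h0
    constructor
    · by_contra hlt
      push_neg at hlt
      set e : ℝ := s.re - a₁ with he
      have hee : e < 0 := by simp only [he]; linarith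
      set t : ℝ := (max C 1 + 1) ^ e⁻¹ with htdef
      have hM : (1:ℝ) < max C 1 + 1 := by
        have := le_max_right C 1; linarith
      have ht : 0 < t := Real.rpow_pos_of_pos (by linarith) _
      have ht1 : t ≤ 1 :=
        Real.rpow_le_one_of_one_le_of_nonpos hM.le (inv_nonpos.mpr hee.le)
      have hte : t ^ e = max C 1 + 1 := by
        rw [htdef, ← Real.rpow_mul (by linarith), inv_mul_cancel₀ hee.ne, Real.rpow_one]
      have := key t ht
      rw [if_pos ht1, hte] at this
      have := le_max_left C 1
      linarith
    · by_contra hlt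
      push_neg at hlt
      set e : ℝ := s.re - a₂ with he
      have hee : 0 < e := by simp only [he]; linarith
      set t : ℝ := (max C 1 + 1) ^ e⁻¹ with htdef
      have hM : (1:ℝ) < max C 1 + 1 := by
        have := le_max_right C 1; linarith
      have ht : 0 < t := Real.rpow_pos_of_pos (by linarith) _
      have ht1 : 1 < t := Real.one_lt_rpow_iff_of_pos (by linarith) |>.mpr
        (Or.inl ⟨hM, inv_pos.mpr hee⟩)
      have hte : t ^ e = max C 1 + 1 := by
        rw [htdef, ← Real.rpow_mul (by linarith), inv_mul_cancel₀ hee.ne', Real.rpow_one]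
      have := key t ht
      rw [if_neg (not_le.mpr ht1), hte] at this
      have := le_max_left C 1
      linarith
  · rintro ⟨h1, h2⟩ k
    refine ⟨‖∏ i ∈ Finset.range k, (s - 1 - i)‖, fun t ht => ?_⟩
    rw [iteratedDeriv_ofReal_cpow s k t ht, norm_mul]
    have habs : ‖(t:ℂ) ^ (s - 1 - k)‖ = t ^ (s.re - 1 - k) := by
      rw [Complex.norm_cpow_eq_rpow_re_of_pos ht]
      norm_num
    rw [habs]
    set P : ℝ := ‖∏ i ∈ Finset.range k, (s - 1 - i)‖ with hP
    have hP0 : 0 ≤ P := norm_nonneg _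
    split_ifs with h1'
    · have he : t ^ (-a₁) * t ^ ((k:ℝ) + 1) * t ^ (s.re - 1 - k)
          = t ^ (s.re - a₁) := by
        rw [← Real.rpow_add ht, ← Real.rpow_add ht]; congr 1; ring
      calc t ^ (-a₁) * t ^ ((k:ℝ) + 1) * (P * t ^ (s.re - 1 - k))
          = P * (t ^ (-a₁) * t ^ ((k:ℝ) + 1) * t ^ (s.re - 1 - k)) := by ring
        _ = P * t ^ (s.re - a₁) := by rw [he]
        _ ≤ P * 1 := mul_le_mul_of_nonneg_left
              (Real.rpow_le_one ht.le h1' (by linarith)) hP0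
        _ = P := mul_one P
    · push_neg at h1'
      have he : t ^ (-a₂) * t ^ ((k:ℝ) + 1) * t ^ (s.re - 1 - k)
          = t ^ (s.re - a₂) := by
        rw [← Real.rpow_add ht, ← Real.rpow_add ht]; congr 1; ring
      calc t ^ (-a₂) * t ^ ((k:ℝ) + 1) * (P * t ^ (s.re - 1 - k))
          = P * (t ^ (-a₂) * t ^ ((k:ℝ) + 1) * t ^ (s.re - 1 - k)) := by ring
        _ = P * t ^ (s.re - a₂) := by rw [he]
        _ ≤ P * 1 := mul_le_mul_of_nonneg_left
              (Real.rpow_le_one_of_one_le_of_nonpos h1'.le (by linarith)) hP0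
        _ = P := mul_one P
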